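/- Let H₀ be a bounded self-adjoint operator on a Hilbert space with E₀ = inf σ(H₀), let V be self-adjoint with ‖V‖ ≤ 1, λ > 0, and suppose E₀ - 2λ is not in σ(H₀). Then for every vector ψ, ⟨ψ, (H₀ + λV - (E₀-λ))⁻¹ ψ⟩ ≥ ⟨ψ, (H₀ - (E₀ - 2λ))⁻¹ ψ⟩ ≥ 0, provided H₀ + λV - (E₀-λ) is invertible. -/
import Mathlib


open scoped InnerProductSpace

section Aux

variable {H : Type*} [NormedAddCommGroup H] [InnerProductSpace ℝ H] [CompleteSpace H]

lemma aux_sym {T : H →L[ℝ] H} (hT : IsSelfAdjoint T) (x y : H) :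
    ⟪T x, y⟫_ℝ = ⟪x, T y⟫_ℝ :=
  ContinuousLinearMap.isSelfAdjoint_iff_isSymmetric.mp hT x y

/-- Cauchy–Schwarz type estimate for a positive self-adjoint operator. -/
lemma aux_cs (T : H →L[ℝ] H) (hT : IsSelfAdjoint T)
    (hpos : ∀ x, 0 ≤ ⟪x, T x⟫_ℝ) (x : H) :
    ‖T x‖ ^ 2 ≤ ‖T‖ * ⟪x, T x⟫_ℝ := by
  have e1 : ⟪x, T (T x)⟫_ℝ = ‖T x‖ ^ 2 := by
    rw [← aux_sym hT x (T x), real_inner_self_eq_norm_sq]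
  have key : ∀ t : ℝ, 0 ≤ ⟪T x, T (T x)⟫_ℝ * (t * t) + (2 * ‖T x‖ ^ 2) * t
      + ⟪x, T x⟫_ℝ := by
    intro t
    have h := hpos (x + t • T x)
    simp only [map_add, map_smul, inner_add_left, inner_add_right,
      real_inner_smul_left, real_inner_smul_right] at h
    rw [e1, real_inner_self_eq_norm_sq] at h
    nlinarith [h]
  have hdisc := discrim_le_zero key
  rw [discrim] at hdisc
  have h1 : ‖T x‖ ^ 2 * ‖T x‖ ^ 2 ≤ ⟪T x, T (T x)⟫_ℝ * ⟪x, T x⟫_ℝ := by nlinarith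
  have h2 : ⟪T x, T (T x)⟫_ℝ ≤ ‖T‖ * ‖T x‖ ^ 2 := by
    calc ⟪T x, T (T x)⟫_ℝ ≤ ‖T x‖ * ‖T (T x)‖ := real_inner_le_norm _ _
    _ ≤ ‖T x‖ * (‖T‖ * ‖T x‖) := by
        exact mul_le_mul_of_nonneg_left (T.le_opNorm _) (norm_nonneg _)
    _ = ‖T‖ * ‖T x‖ ^ 2 := by ring
  have ha0 : 0 ≤ ⟪x, T x⟫_ℝ := hpos x
  rcases eq_or_lt_of_le (sq_nonneg ‖T x‖) with h0 | h0
  · rw [← h0]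
    positivity
  · nlinarith

/-- Quadratic form lower bound from the infimum of the spectrum. -/
lemma aux_form_lb [Nontrivial H] (T : H →L[ℝ] H) (hT : IsSelfAdjoint T) (x : H) :
    sInf (spectrum ℝ T) * ‖x‖ ^ 2 ≤ ⟪x, T x⟫_ℝ := by
  have hsym := ContinuousLinearMap.isSelfAdjoint_iff_isSymmetric.mp hT
  -- the set of Rayleigh quotients over unit vectors
  set S : Set ℝ := {r | ∃ u : H, ‖u‖ = 1 ∧ r = ⟪u, T u⟫_ℝ} with hS
  have hSne : S.Nonempty := by
    obtain ⟨v, hv⟩ := exists_ne (0 : H)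
    exact ⟨⟪‖v‖⁻¹ • v, T (‖v‖⁻¹ • v)⟫_ℝ, ‖v‖⁻¹ • v, norm_smul_inv_norm hv, rfl⟩
  have hSbdd : BddBelow S := by
    refine ⟨-‖T‖, ?_⟩
    rintro r ⟨u, hu, rfl⟩
    have h1 : |⟪u, T u⟫_ℝ| ≤ ‖u‖ * ‖T u‖ := abs_real_inner_le_norm _ _
    have h2 : ‖T u‖ ≤ ‖T‖ := by simpa [hu] using T.le_opNorm u
    have := abs_le.mp h1
    nlinarith [this.1]
  set m := sInf S with hm
  -- the quadratic form of `T - m • 1` is nonnegative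
  have hform : ∀ y : H, 0 ≤ ⟪y, (T - m • (1 : H →L[ℝ] H)) y⟫_ℝ := by
    intro y
    rcases eq_or_ne y 0 with rfl | hy
    · simp
    · have hu : ‖‖y‖⁻¹ • y‖ = 1 := norm_smul_inv_norm hy
      have hmem : ⟪‖y‖⁻¹ • y, T (‖y‖⁻¹ • y)⟫_ℝ ∈ S := ⟨_, hu, rfl⟩
      have hle : m ≤ ⟪‖y‖⁻¹ • y, T (‖y‖⁻¹ • y)⟫_ℝ := csInf_le hSbdd hmem
      have hny : (0:ℝ) < ‖y‖ := norm_pos_iff.mpr hy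
      have hexp : ⟪‖y‖⁻¹ • y, T (‖y‖⁻¹ • y)⟫_ℝ = (‖y‖⁻¹ * ‖y‖⁻¹) * ⟪y, T y⟫_ℝ := by
        rw [map_smul, real_inner_smul_left, real_inner_smul_right]; ring
      have : m * ‖y‖ ^ 2 ≤ ⟪y, T y⟫_ℝ := by
        rw [hexp] at hle
        have h2 : m * ‖y‖ ^ 2 ≤ ((‖y‖⁻¹ * ‖y‖⁻¹) * ⟪y, T y⟫_ℝ) * ‖y‖ ^ 2 :=
          mul_le_mul_of_nonneg_right hle (by positivity)
        have h3 : ((‖y‖⁻¹ * ‖y‖⁻¹) * ⟪y, T y⟫_ℝ) * ‖y‖ ^ 2 = ⟪y, T y⟫_ℝ := by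
          rw [pow_two]; field_simp
        linarith [h2, h3.le, h3.ge]
      simp only [ContinuousLinearMap.sub_apply, ContinuousLinearMap.smul_apply,
        ContinuousLinearMap.one_apply, inner_sub_right, real_inner_smul_right,
        real_inner_self_eq_norm_sq]
      linarith
  have hTm : IsSelfAdjoint (T - m • (1 : H →L[ℝ] H)) := by
    refine hT.sub ?_
    simpa [IsSelfAdjoint, star_smul] using congrArg (m • ·) (isSelfAdjoint_one (H →L[ℝ] H)).star_eq
  -- `m` belongs to the spectrum
  have hmem : m ∈ spectrum ℝ T := by
    rw [spectrum.mem_iff]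
    intro hUnit
    have hUnit' : IsUnit (T - m • (1 : H →L[ℝ] H)) := by
      have : algebraMap ℝ (H →L[ℝ] H) m - T = -(T - m • (1 : H →L[ℝ] H)) := by
        rw [Algebra.algebraMap_eq_smul_one]; abel
      rw [this] at hUnit
      exact (IsUnit.neg_iff _).mp hUnit
    set A := T - m • (1 : H →L[ℝ] H) with hA
    obtain ⟨u, hu⟩ := hUnit'
    have hinv : (↑u⁻¹ : H →L[ℝ] H) * A = 1 := by rw [← hu]; exact u.inv_mul
    have hone : (1 : H →L[ℝ] H) ≠ 0 := by
      intro h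
      obtain ⟨v, hv⟩ := exists_ne (0 : H)
      have : v = 0 := by
        have := congrArg (fun f : H →L[ℝ] H => f v) h
        simpa using this
      exact hv this
    have hAne : A ≠ 0 := by
      intro h; rw [h, mul_zero] at hinv; exact hone hinv.symm
    have hSne' : (↑u⁻¹ : H →L[ℝ] H) ≠ 0 := by
      intro h; rw [h, zero_mul] at hinv; exact hone hinv.symm
    have hApos : (0:ℝ) < ‖A‖ := norm_pos_iff.mpr hAne
    have hSpos : (0:ℝ) < ‖(↑u⁻¹ : H →L[ℝ] H)‖ := norm_pos_iff.mpr hSne'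
    set C := ‖(↑u⁻¹ : H →L[ℝ] H)‖ ^ 2 * ‖A‖ with hC
    have hCpos : 0 < C := by positivity
    obtain ⟨r, hrS, hr⟩ := (csInf_lt_iff hSbdd hSne).mp
      (lt_add_of_pos_right m (show (0:ℝ) < C⁻¹ by positivity))
    obtain ⟨w, hw, rfl⟩ := hrS
    have hwA : ⟪w, A w⟫_ℝ < C⁻¹ := by
      have : ⟪w, A w⟫_ℝ = ⟪w, T w⟫_ℝ - m := by
        simp [hA, ContinuousLinearMap.sub_apply, inner_sub_right, real_inner_smul_right,
          real_inner_self_eq_norm_sq, hw]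
      rw [this]; linarith
    have hcs := aux_cs A hTm hform w
    have hlow : (1:ℝ) ≤ ‖(↑u⁻¹ : H →L[ℝ] H)‖ ^ 2 * ‖A w‖ ^ 2 := by
      have : ‖w‖ ≤ ‖(↑u⁻¹ : H →L[ℝ] H)‖ * ‖A w‖ := by
        have := (↑u⁻¹ : H →L[ℝ] H).le_opNorm (A w)
        have heq : (↑u⁻¹ : H →L[ℝ] H) (A w) = w := by
          have := congrArg (fun f : H →L[ℝ] H => f w) hinv
          simpa using this
        rwa [heq] at this
      nlinarith [norm_nonneg (A w), norm_nonneg ((↑u⁻¹ : H →L[ℝ] H))]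
    have h0 : 0 ≤ ⟪w, A w⟫_ℝ := hform w
    have : (1:ℝ) ≤ C * ⟪w, A w⟫_ℝ := by
      calc (1:ℝ) ≤ ‖(↑u⁻¹ : H →L[ℝ] H)‖ ^ 2 * ‖A w‖ ^ 2 := hlow
      _ ≤ ‖(↑u⁻¹ : H →L[ℝ] H)‖ ^ 2 * (‖A‖ * ⟪w, A w⟫_ℝ) := by
          exact mul_le_mul_of_nonneg_left hcs (by positivity)
      _ = C * ⟪w, A w⟫_ℝ := by rw [hC]; ring
    have : (1:ℝ) < C * C⁻¹ := lt_of_le_of_lt this (by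
      exact mul_lt_mul_of_pos_left hwA hCpos)
    rw [mul_inv_cancel₀ (ne_of_gt hCpos)] at this
    exact lt_irrefl 1 this
  -- conclude
  have hspec_bdd : BddBelow (spectrum ℝ T) := by
    refine ⟨-‖T‖, ?_⟩
    intro k hk
    have := spectrum.norm_le_norm_of_mem hk
    have := abs_le.mp (by rwa [Real.norm_eq_abs] at this)
    linarith [this.1]
  have hEm : sInf (spectrum ℝ T) ≤ m := csInf_le hspec_bdd hmem
  have := hform x
  simp only [ContinuousLinearMap.sub_apply, ContinuousLinearMap.smul_apply,
    ContinuousLinearMap.one_apply, inner_sub_right, real_inner_smul_right,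
    real_inner_self_eq_norm_sq] at this
  nlinarith [sq_nonneg ‖x‖]

end Aux

/-- Deterministic lower bound on the Green function at the perturbed spectral edge:
for self-adjoint `H₀` with `inf σ(H₀) = E₀`, self-adjoint `V` with `‖V‖ ≤ 1`, `λ > 0`,
`E₀ - 2λ ∉ σ(H₀)`, and `H₀ + λV - (E₀ - λ)` invertible, one has
`⟨ψ, (H₀ + λV - (E₀-λ))⁻¹ ψ⟩ ≥ ⟨ψ, (H₀ - (E₀-2λ))⁻¹ ψ⟩ ≥ 0` for every `ψ`. -/
theorem stmt_3 {H : Type*} [NormedAddCommGroup H] [InnerProductSpace ℝ H]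
    [CompleteSpace H] (H₀ V : H →L[ℝ] H) (E₀ lam : ℝ)
    (hH₀ : IsSelfAdjoint H₀) (hV : IsSelfAdjoint V) (hVnorm : ‖V‖ ≤ 1)
    (hE₀ : sInf (spectrum ℝ H₀) = E₀) (hlam : 0 < lam)
    (hres : (E₀ - 2 * lam) ∉ spectrum ℝ H₀)
    (hinv : IsUnit (H₀ + lam • V - (E₀ - lam) • (1 : H →L[ℝ] H))) :
    ∀ ψ : H,
      0 ≤ ⟪ψ, Ring.inverse (H₀ - (E₀ - 2 * lam) • (1 : H →L[ℝ] H)) ψ⟫_ℝ ∧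
      ⟪ψ, Ring.inverse (H₀ - (E₀ - 2 * lam) • (1 : H →L[ℝ] H)) ψ⟫_ℝ
        ≤ ⟪ψ, Ring.inverse (H₀ + lam • V - (E₀ - lam) • (1 : H →L[ℝ] H)) ψ⟫_ℝ := by
  intro ψ
  rcases subsingleton_or_nontrivial H with hsub | hnt
  · have : ψ = 0 := Subsingleton.elim ψ 0
    subst this
    simp
  · set B := H₀ - (E₀ - 2 * lam) • (1 : H →L[ℝ] H) with hBdef
    set A := H₀ + lam • V - (E₀ - lam) • (1 : H →L[ℝ] H) with hAdef
    -- invertibility of B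
    have hBunit : IsUnit B := by
      rw [spectrum.notMem_iff] at hres
      have : algebraMap ℝ (H →L[ℝ] H) (E₀ - 2 * lam) - H₀ = -B := by
        rw [Algebra.algebraMap_eq_smul_one]; rw [hBdef]; abel
      rw [this] at hres
      exact (IsUnit.neg_iff _).mp hres
    -- self-adjointness
    have hsmul_sa : ∀ c : ℝ, IsSelfAdjoint (c • (1 : H →L[ℝ] H)) := by
      intro c
      simpa [IsSelfAdjoint, star_smul] using
        congrArg (c • ·) (isSelfAdjoint_one (H →L[ℝ] H)).star_eq
    have hBsa : IsSelfAdjoint B := hH₀.sub (hsmul_sa _)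
    have hAsa : IsSelfAdjoint A := by
      refine IsSelfAdjoint.sub (hH₀.add ?_) (hsmul_sa _)
      simpa [IsSelfAdjoint, star_smul] using congrArg (lam • ·) hV.star_eq
        -- quadratic form bounds
    have hH₀lb : ∀ x : H, E₀ * ‖x‖ ^ 2 ≤ ⟪x, H₀ x⟫_ℝ := by
      intro x
      have := aux_form_lb H₀ hH₀ x
      rwa [hE₀] at this
    have hVb : ∀ x : H, |⟪x, V x⟫_ℝ| ≤ ‖x‖ ^ 2 := by
      intro x
      calc |⟪x, V x⟫_ℝ| ≤ ‖x‖ * ‖V x‖ := abs_real_inner_le_norm _ _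
      _ ≤ ‖x‖ * (‖V‖ * ‖x‖) := mul_le_mul_of_nonneg_left (V.le_opNorm x) (norm_nonneg _)
      _ ≤ ‖x‖ ^ 2 := by nlinarith [norm_nonneg x, sq_nonneg ‖x‖]
    have hBform : ∀ x : H, ⟪x, B x⟫_ℝ = ⟪x, H₀ x⟫_ℝ - (E₀ - 2 * lam) * ‖x‖ ^ 2 := by
      intro x
      simp [hBdef, ContinuousLinearMap.sub_apply, inner_sub_right, real_inner_smul_right,
        real_inner_self_eq_norm_sq]
    have hAform : ∀ x : H,
        ⟪x, A x⟫_ℝ = ⟪x, H₀ x⟫_ℝ + lam * ⟪x, V x⟫_ℝ - (E₀ - lam) * ‖x‖ ^ 2 := by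
      intro x
      simp [hAdef, ContinuousLinearMap.sub_apply, ContinuousLinearMap.add_apply,
        inner_sub_right, inner_add_right, real_inner_smul_right, real_inner_self_eq_norm_sq]
    have hBpos : ∀ x : H, 0 ≤ ⟪x, B x⟫_ℝ := by
      intro x
      rw [hBform]
      have := hH₀lb x
      nlinarith [sq_nonneg ‖x‖]
    have hApos : ∀ x : H, 0 ≤ ⟪x, A x⟫_ℝ := by
      intro x
      rw [hAform]
      have h1 := hH₀lb x
      have h2 := abs_le.mp (hVb x)
      nlinarith [h2.1, sq_nonneg ‖x‖]
    have hABle : ∀ x : H, ⟪x, A x⟫_ℝ ≤ ⟪x, B x⟫_ℝ := by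
      intro x
      rw [hAform, hBform]
      have h2 := abs_le.mp (hVb x)
      nlinarith [h2.2]
    -- the inverses
    set y := Ring.inverse B ψ with hy
    set z := Ring.inverse A ψ with hz
    have hBy : B y = ψ := by
      have : B * Ring.inverse B = 1 := Ring.mul_inverse_cancel B hBunit
      have := congrArg (fun f : H →L[ℝ] H => f ψ) this
      simpa using this
    have hAz : A z = ψ := by
      have : A * Ring.inverse A = 1 := Ring.mul_inverse_cancel A hinv
      have := congrArg (fun f : H →L[ℝ] H => f ψ) this
      simpa using this
    constructor
    · -- nonnegativity
      have : ⟪ψ, y⟫_ℝ = ⟪y, B y⟫_ℝ := by rw [← hBy]; exact real_inner_comm _ _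
      rw [this]
      exact hBpos y
    · -- comparison
      have key : 0 ≤ ⟪z - y, A (z - y)⟫_ℝ := hApos _
      have e1 : ⟪z, A z⟫_ℝ = ⟪ψ, z⟫_ℝ := by rw [hAz]; exact real_inner_comm _ _
      have e2 : ⟪z, A y⟫_ℝ = ⟪ψ, y⟫_ℝ := by
        rw [← aux_sym hAsa z y, hAz]
      have e3 : ⟪y, A z⟫_ℝ = ⟪ψ, y⟫_ℝ := by rw [hAz]; exact real_inner_comm _ _
      have e4 : ⟪y, B y⟫_ℝ = ⟪ψ, y⟫_ℝ := by rw [← aux_sym hBsa y y, hBy]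
      have hexp : ⟪z - y, A (z - y)⟫_ℝ
          = ⟪ψ, z⟫_ℝ - 2 * ⟪ψ, y⟫_ℝ + ⟪y, A y⟫_ℝ := by
        rw [map_sub, inner_sub_left, inner_sub_right, inner_sub_right, e1, e2, e3]
        ring
      have hy_le : ⟪y, A y⟫_ℝ ≤ ⟪ψ, y⟫_ℝ := by rw [← e4]; exact hABle y
      rw [hexp] at key
      linarith
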